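/- arXiv:1701.01813 — 3 statements merged into one kernel-verified Lean document; each statement's English description precedes it below -/
import Mathlib

section
/- Let a > 0, k > 0 and let N be a positive integer. Then ∫_{(a)} |e^{Nz}·z^{−k−1}|·|S̃₁(z)·S̃₂(z)²| |dz| ≪_k a^{−2−k}·e^{Na}, where S̃₁(z) = ∑_{m≥1} Λ(m)e^{−mz} and S̃₂(z) = ∑_{m≥1} Λ(m)e^{−m²z}. -/
open Complex ArithmeticFunction

noncomputable section

/-- `S̃₁(z) = ∑_{m ≥ 1} Λ(m) e^{-mz}`. -/
def S1 (z : ℂ) : ℂ := ∑' m : ℕ, (vonMangoldt m : ℂ) * Complex.exp (-(m : ℂ) * z)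

/-- `S̃₂(z) = ∑_{m ≥ 1} Λ(m) e^{-m²z}`. -/
def S2 (z : ℂ) : ℂ := ∑' m : ℕ, (vonMangoldt m : ℂ) * Complex.exp (-(m : ℂ) ^ 2 * z)

open Finset Filter Topology

-- prime part
lemma theta_le (n : ℕ) : ∑ p ∈ (range (n+1)).filter Nat.Prime, Λ p ≤ 3 * n := by
  have h1 : ∑ p ∈ (range (n+1)).filter Nat.Prime, Λ p
      = Real.log (primorial n) := by
    rw [primorial]
    push_cast
    rw [Real.log_prod]
    · exact Finset.sum_congr rfl fun p hp => by
        rw [vonMangoldt_apply_prime (Finset.mem_filter.1 hp).2]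
    · intro p hp
      exact_mod_cast (Finset.mem_filter.1 hp).2.pos.ne'
  rw [h1]
  have h2 : (primorial n : ℝ) ≤ 4 ^ n := by exact_mod_cast primorial_le_4_pow n
  have hpp : (0:ℝ) < primorial n := by exact_mod_cast primorial_pos n
  calc Real.log (primorial n) ≤ Real.log (4 ^ n) :=
        Real.log_le_log hpp h2
    _ = n * Real.log 4 := by rw [Real.log_pow]
    _ ≤ n * 3 := by
        have : Real.log 4 ≤ 4 - 1 := Real.log_le_sub_one_of_pos (by norm_num)
        nlinarith [Nat.cast_nonneg (α := ℝ) n]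
    _ = 3 * n := by ring

lemma pp_card (n : ℕ) (hn : n ≠ 0) :
    ((range (n+1)).filter (fun m => IsPrimePow m ∧ ¬ m.Prime)).card
      ≤ (Nat.sqrt n + 1) * (Nat.log 2 n) := by
  classical
  have hsub : ((range (n+1)).filter (fun m => IsPrimePow m ∧ ¬ m.Prime))
      ⊆ ((range (Nat.sqrt n + 1)) ×ˢ (Finset.Icc 2 (Nat.log 2 n))).image
          (fun q : ℕ × ℕ => q.1 ^ q.2) := by
    intro m hm
    rw [Finset.mem_filter] at hm
    obtain ⟨hmr, ⟨p, kk, hp, hkpos, rfl⟩, hnp⟩ := hm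
    have hpp := hp.nat_prime
    have hmn : p ^ kk ≤ n := Nat.lt_succ_iff.1 (Finset.mem_range.1 hmr)
    have hk2 : 2 ≤ kk := by
      by_contra h
      have hkk : kk = 1 := by omega
      subst hkk
      rw [pow_one] at hnp
      exact hnp hpp
    have hp2 : 2 ≤ p := hpp.two_le
    refine Finset.mem_image.2 ⟨(p, kk), Finset.mem_product.2 ⟨?_, ?_⟩, rfl⟩
    · rw [Finset.mem_range, Nat.lt_succ_iff, Nat.le_sqrt]
      calc p * p = p ^ 2 := (sq p).symm
        _ ≤ p ^ kk := Nat.pow_le_pow_right (by omega) hk2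
        _ ≤ n := hmn
    · rw [Finset.mem_Icc]
      refine ⟨hk2, ?_⟩
      rw [Nat.le_log_iff_pow_le (by norm_num) hn]
      calc 2 ^ kk ≤ p ^ kk := Nat.pow_le_pow_left hp2 _
        _ ≤ n := hmn
  calc _ ≤ _ := Finset.card_le_card hsub
    _ ≤ ((range (Nat.sqrt n + 1)) ×ˢ (Finset.Icc 2 (Nat.log 2 n))).card :=
        Finset.card_image_le
    _ ≤ (Nat.sqrt n + 1) * (Nat.log 2 n) := by
        rw [Finset.card_product, Finset.card_range, Nat.card_Icc]
        exact Nat.mul_le_mul_left _ (by omega)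

lemma psi_le (n : ℕ) : ∑ m ∈ range (n+1), Λ m ≤ 100 * n := by
  rcases Nat.eq_zero_or_pos n with rfl | hn
  · simp
  have hn0 : (0:ℝ) < n := by exact_mod_cast hn
  have hn1 : (1:ℝ) ≤ n := by exact_mod_cast hn
  classical
  rw [← Finset.sum_filter_add_sum_filter_not (range (n+1)) Nat.Prime]
  have hprime : ∑ p ∈ (range (n+1)).filter Nat.Prime, Λ p ≤ 3 * n := theta_le n
  -- non-prime part
  set T := (range (n+1)).filter (fun m => IsPrimePow m ∧ ¬ m.Prime) with hT
  have hzero : ∑ m ∈ (range (n+1)).filter (fun m => ¬ m.Prime), Λ m = ∑ m ∈ T, Λ m := by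
    refine (Finset.sum_subset ?_ ?_).symm
    · intro x hx
      rw [Finset.mem_filter] at hx ⊢
      exact ⟨hx.1, hx.2.2⟩
    · intro x hx hxT
      rw [Finset.mem_filter] at hx
      rw [vonMangoldt_eq_zero_iff]
      intro hpp
      exact hxT (Finset.mem_filter.2 ⟨hx.1, hpp, hx.2⟩)
  have hlogn0 : 0 ≤ Real.log n := Real.log_nonneg hn1
  have hterm : ∀ m ∈ T, Λ m ≤ Real.log n := by
    intro m hm
    rw [hT, Finset.mem_filter, Finset.mem_range, Nat.lt_succ_iff] at hm
    refine le_trans vonMangoldt_le_log ?_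
    rcases Nat.eq_zero_or_pos m with rfl | hm0
    · simpa using hlogn0
    · exact Real.log_le_log (by exact_mod_cast hm0) (by exact_mod_cast hm.1)
  have hsum_le : ∑ m ∈ T, Λ m ≤ (T.card : ℝ) * Real.log n := by
    calc ∑ m ∈ T, Λ m ≤ ∑ _m ∈ T, Real.log n := Finset.sum_le_sum hterm
      _ = (T.card : ℝ) * Real.log n := by rw [Finset.sum_const, nsmul_eq_mul]
  have hcard : (T.card : ℝ) ≤ ((Nat.sqrt n : ℝ) + 1) * (Nat.log 2 n : ℝ) := by
    have := pp_card n hn.ne'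
    rw [hT]
    exact_mod_cast this
  -- real estimates
  have hsqrt : (Nat.sqrt n : ℝ) ≤ Real.sqrt n := by
    exact Real.nat_sqrt_le_real_sqrt
  have hsqrt1 : (1:ℝ) ≤ Real.sqrt n := by
    rw [show (1:ℝ) = Real.sqrt 1 by simp]
    exact Real.sqrt_le_sqrt hn1
  have hlog2 : (Nat.log 2 n : ℝ) ≤ 2 * Real.log n := by
    have h1 : (2:ℝ) ^ (Nat.log 2 n : ℕ) ≤ n := by exact_mod_cast Nat.pow_log_le_self 2 hn.ne'
    have h2 : (Nat.log 2 n : ℝ) * Real.log 2 ≤ Real.log n := by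
      rw [← Real.log_pow]
      exact Real.log_le_log (by positivity) h1
    have h3 : (0.6931471803 : ℝ) < Real.log 2 := Real.log_two_gt_d9
    nlinarith [Nat.cast_nonneg (α := ℝ) (Nat.log 2 n)]
  have hlogr : Real.log n ≤ 4 * (n:ℝ) ^ (1/4 : ℝ) := by
    have h1 : Real.log ((n:ℝ) ^ (1/4 : ℝ)) = (1/4 : ℝ) * Real.log n := Real.log_rpow hn0 _
    have h2 : Real.log ((n:ℝ) ^ (1/4 : ℝ)) ≤ (n:ℝ) ^ (1/4 : ℝ) - 1 :=
      Real.log_le_sub_one_of_pos (by positivity)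
    linarith
  have hquarter : (n:ℝ) ^ (1/4 : ℝ) * (n:ℝ) ^ (1/4 : ℝ) = Real.sqrt n := by
    rw [← Real.rpow_add hn0, Real.sqrt_eq_rpow]
    norm_num
  have hss : Real.sqrt n * Real.sqrt n = n := Real.mul_self_sqrt (le_of_lt hn0)
  have hlogsq : Real.log n * Real.log n ≤ 16 * Real.sqrt n := by
    nlinarith [hlogr, hquarter, Real.rpow_nonneg (le_of_lt hn0) (1/4 : ℝ), hlogn0]
  have hnonprime : ∑ m ∈ T, Λ m ≤ 64 * n := by
    calc ∑ m ∈ T, Λ m ≤ (T.card : ℝ) * Real.log n := hsum_le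
      _ ≤ (((Nat.sqrt n : ℝ) + 1) * (Nat.log 2 n : ℝ)) * Real.log n := by
          apply mul_le_mul_of_nonneg_right hcard hlogn0
      _ ≤ ((Real.sqrt n + Real.sqrt n) * (2 * Real.log n)) * Real.log n := by
          apply mul_le_mul_of_nonneg_right _ hlogn0
          apply mul_le_mul (by linarith) hlog2 (Nat.cast_nonneg _) (by positivity)
      _ = 4 * Real.sqrt n * (Real.log n * Real.log n) := by ring
      _ ≤ 4 * Real.sqrt n * (16 * Real.sqrt n) := by
          apply mul_le_mul_of_nonneg_left hlogsq (by positivity)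
      _ = 64 * (Real.sqrt n * Real.sqrt n) := by ring
      _ = 64 * n := by rw [hss]
  rw [hzero]
  linarith


lemma key_lemma (w : ℕ → ℝ) (hw0 : ∀ n, 0 ≤ w n) (hmono : ∀ n, w (n+1) ≤ w n)
    (hlim : Tendsto w atTop (𝓝 0))
    (hs : Summable (fun n : ℕ => (n:ℝ) * (w n - w (n+1)))) :
    ∑' m : ℕ, Λ m * w m ≤ 100 * ∑' n : ℕ, (n:ℝ) * (w n - w (n+1)) := by
  classical
  set g : ℕ → ℝ := fun n => w n - w (n+1) with hg
  have hg0 : ∀ n, 0 ≤ g n := fun n => sub_nonneg.2 (hmono n)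
  have hgsum : Summable g := by
    apply summable_of_sum_range_le hg0
    intro J
    rw [Finset.sum_range_sub' w J]
    have := hw0 J
    linarith
  have htel : ∀ m : ℕ, HasSum (fun j => g (m + j)) (w m) := by
    intro m
    have hsm : Summable (fun j => g (m + j)) := by
      have := (summable_nat_add_iff m).2 hgsum
      simpa [add_comm] using this
    rw [hsm.hasSum_iff_tendsto_nat]
    have hps : ∀ J, ∑ j ∈ range J, g (m + j) = w m - w (m + J) := by
      intro J
      have : ∀ j, g (m + j) = w (m + j) - w (m + (j+1)) := by
        intro j; rw [hg]; simp [add_assoc]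
      simp_rw [this]
      exact Finset.sum_range_sub' (fun j => w (m + j)) J
    simp_rw [hps]
    have h2 : Tendsto (fun J : ℕ => w (m + J)) atTop (𝓝 0) := by
      have := hlim.comp (tendsto_add_atTop_nat m)
      simpa [Function.comp_def, add_comm] using this
    simpa using tendsto_const_nhds.sub h2
  have hite : ∀ m : ℕ, Summable (fun n => if m ≤ n then g n else 0) := by
    intro m
    apply Summable.of_nonneg_of_le (fun n => ?_) (fun n => ?_) hgsum
    · split
      exacts [hg0 n, le_rfl]
    · split
      exacts [le_rfl, hg0 n]
  have hform : ∀ m : ℕ, w m = ∑' n : ℕ, (if m ≤ n then g n else 0) := by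
    intro m
    have hsf := hite m
    have h1 := Summable.sum_add_tsum_nat_add (f := fun n => if m ≤ n then g n else 0) m hsf
    have h2 : ∑ i ∈ range m, (if m ≤ i then g i else 0) = 0 := by
      apply Finset.sum_eq_zero
      intro i hi
      rw [if_neg]
      exact Nat.not_le.2 (Finset.mem_range.1 hi)
    have h3 : ∑' j : ℕ, (if m ≤ j + m then g (j + m) else 0) = w m := by
      have : ∀ j : ℕ, (if m ≤ j + m then g (j + m) else 0) = g (m + j) := fun j => by
        rw [if_pos (Nat.le_add_left m j), add_comm]
      simp_rw [this]
      exact (htel m).tsum_eq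
    rw [← h1, h2, zero_add]
    exact h3.symm
  have hRnn : (0:ℝ) ≤ 100 * ∑' n : ℕ, (n:ℝ) * g n :=
    mul_nonneg (by norm_num) (tsum_nonneg fun n => mul_nonneg (Nat.cast_nonneg n) (hg0 n))
  apply tsum_le_of_sum_le'  hRnn
  intro F
  have step1 : ∑ m ∈ F, Λ m * w m
      = ∑' n : ℕ, ∑ m ∈ F, Λ m * (if m ≤ n then g n else 0) := by
    rw [Summable.tsum_finsetSum (fun m _ => ?_)]
    · exact Finset.sum_congr rfl fun m _ => by
        rw [hform m, ← tsum_mul_left]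
    · exact Summable.mul_left _ (hite m)
  rw [step1]
  have step2 : ∀ n : ℕ, ∑ m ∈ F, Λ m * (if m ≤ n then g n else 0)
      ≤ 100 * ((n:ℝ) * g n) := by
    intro n
    have e1 : ∑ m ∈ F, Λ m * (if m ≤ n then g n else 0)
        = (∑ m ∈ F.filter (· ≤ n), Λ m) * g n := by
      rw [Finset.sum_filter, Finset.sum_mul]
      exact Finset.sum_congr rfl fun m _ => by split <;> simp [mul_comm]
    rw [e1]
    have e2 : ∑ m ∈ F.filter (· ≤ n), Λ m ≤ 100 * n := by
      refine le_trans (Finset.sum_le_sum_of_subset_of_nonneg ?_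
        (fun i _ _ => vonMangoldt_nonneg)) (psi_le n)
      intro m hm
      rw [Finset.mem_filter] at hm
      exact Finset.mem_range.2 (Nat.lt_succ_of_le hm.2)
    calc (∑ m ∈ F.filter (· ≤ n), Λ m) * g n ≤ (100 * n) * g n :=
          mul_le_mul_of_nonneg_right e2 (hg0 n)
      _ = 100 * ((n:ℝ) * g n) := by ring
  calc ∑' n : ℕ, ∑ m ∈ F, Λ m * (if m ≤ n then g n else 0)
      ≤ ∑' n : ℕ, 100 * ((n:ℝ) * g n) := by
        apply Summable.tsum_le_tsum step2 ?_ (hs.mul_left 100)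
        exact summable_sum fun m _ => Summable.mul_left _ (hite m)
    _ = 100 * ∑' n : ℕ, (n:ℝ) * g n := tsum_mul_left


lemma sum1 (a : ℝ) (ha : 0 < a) :
    ∑' m : ℕ, Λ m * Real.exp (-(m:ℝ) * a) ≤ 100 / a := by
  set r : ℝ := Real.exp (-a) with hr
  have hr0 : 0 < r := Real.exp_pos _
  have hr1 : r < 1 := by
    rw [hr, Real.exp_lt_one_iff]
    linarith
  have hwr : ∀ n : ℕ, Real.exp (-(n:ℝ) * a) = r ^ n := by
    intro n
    rw [hr, ← Real.exp_nat_mul]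
    ring_nf
  have hnorm : ‖r‖ < 1 := by rwa [Real.norm_eq_abs, abs_of_pos hr0]
  have hgeo : Summable (fun n : ℕ => (n:ℝ) * r ^ n) := by
    have := summable_pow_mul_geometric_of_norm_lt_one (R := ℝ) 1 hnorm
    simpa using this
  have hptw : ∀ n : ℕ, (n:ℝ) * (Real.exp (-(n:ℝ) * a) - Real.exp (-((n:ℕ)+1:ℕ) * a))
      = (1 - r) * ((n:ℝ) * r ^ n) := by
    intro n
    rw [hwr n, hwr (n+1), pow_succ]
    ring
  have hs : Summable (fun n : ℕ => (n:ℝ) * (Real.exp (-(n:ℝ) * a) - Real.exp (-((n+1:ℕ):ℝ) * a))) := by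
    refine (hgeo.mul_left (1 - r)).congr fun n => ?_
    exact (hptw n).symm
  have hkey := key_lemma (fun n => Real.exp (-(n:ℝ) * a))
    (fun n => (Real.exp_pos _).le)
    (fun n => by
      apply Real.exp_le_exp.2
      have : (n:ℝ) ≤ (n:ℝ) + 1 := by linarith
      push_cast
      nlinarith)
    (by
      have : Tendsto (fun n : ℕ => r ^ n) atTop (𝓝 0) :=
        tendsto_pow_atTop_nhds_zero_of_lt_one hr0.le hr1
      refine this.congr fun n => (hwr n).symm)
    hs
  have hval : ∑' n : ℕ, (n:ℝ) * (Real.exp (-(n:ℝ) * a) - Real.exp (-((n+1:ℕ):ℝ) * a))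
      = (1 - r) * (r / (1 - r) ^ 2) := by
    rw [← tsum_coe_mul_geometric_of_norm_lt_one hnorm, ← tsum_mul_left]
    exact tsum_congr fun n => hptw n
  refine le_trans hkey ?_
  rw [hval]
  have h1r : 0 < 1 - r := by linarith
  have hexp : 1 + a ≤ Real.exp a := by
    have := Real.add_one_le_exp a
    linarith
  have hra : r * a ≤ 1 - r := by
    rw [hr]
    have hea : Real.exp (-a) * Real.exp a = 1 := by
      rw [← Real.exp_add]; simp
    nlinarith [Real.exp_pos (-a)]
  have : (1 - r) * (r / (1 - r) ^ 2) = r / (1 - r) := by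
    field_simp
  rw [this]
  have hfin : r / (1 - r) ≤ 1 / a := by
    rw [div_le_div_iff₀ h1r ha]
    nlinarith
  calc 100 * (r / (1 - r)) ≤ 100 * (1 / a) := by linarith
    _ = 100 / a := by ring

lemma geom_tail (c : ℝ) (hc : 0 < c) :
    Summable (fun n : ℕ => Real.exp (-((n:ℝ)+1) * c))
      ∧ ∑' n : ℕ, Real.exp (-((n:ℝ)+1) * c) ≤ 1 / c := by
  set s : ℝ := Real.exp (-c) with hs
  have hs0 : 0 < s := Real.exp_pos _
  have hs1 : s < 1 := by rw [hs, Real.exp_lt_one_iff]; linarith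
  have hw : ∀ n : ℕ, Real.exp (-((n:ℝ)+1) * c) = s * s ^ n := by
    intro n
    rw [hs, ← Real.exp_nat_mul, ← Real.exp_add]
    ring_nf
  have hsum : Summable (fun n : ℕ => s * s ^ n) :=
    (summable_geometric_of_lt_one hs0.le hs1).mul_left s
  constructor
  · exact hsum.congr fun n => (hw n).symm
  · have h1 : ∑' n : ℕ, Real.exp (-((n:ℝ)+1) * c) = s * (1 - s)⁻¹ := by
      rw [tsum_congr hw, tsum_mul_left, tsum_geometric_of_lt_one hs0.le hs1]
    rw [h1]
    have h1s : 0 < 1 - s := by linarith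
    have hexp : c + 1 ≤ Real.exp c := Real.add_one_le_exp c
    have hec : Real.exp (-c) * Real.exp c = 1 := by rw [← Real.exp_add]; simp
    rw [← div_eq_mul_inv, div_le_div_iff₀ h1s hc]
    nlinarith [hs0, hexp, hec]

lemma gauss_tail (b : ℝ) (hb : 0 < b) :
    ∑' n : ℕ, Real.exp (-((n:ℝ)+1)^2 * b) ≤ 3 / Real.sqrt b := by
  set q : ℝ := Real.sqrt b with hq
  have hq0 : 0 < q := Real.sqrt_pos.2 hb
  have hqq : q * q = b := Real.mul_self_sqrt hb.le
  have hsummL : Summable (fun n : ℕ => Real.exp (-((n:ℝ)+1)^2 * b)) := by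
    refine Summable.of_nonneg_of_le (fun n => (Real.exp_pos _).le) (fun n => ?_)
      (geom_tail b hb).1
    apply Real.exp_le_exp.2
    have h1 : (1:ℝ) ≤ (n:ℝ) + 1 := by
      have := Nat.cast_nonneg (α := ℝ) n; linarith
    nlinarith [hb.le, mul_le_mul_of_nonneg_right (by nlinarith : ((n:ℝ)+1) ≤ ((n:ℝ)+1)^2) hb.le]
  rcases le_or_gt 1 b with hb1 | hb1
  · -- large b : compare directly with geometric
    have hq1 : 1 ≤ q := by
      rw [hq]
      rw [show (1:ℝ) = Real.sqrt 1 by simp]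
      exact Real.sqrt_le_sqrt hb1
    have hle : ∀ n : ℕ, Real.exp (-((n:ℝ)+1)^2 * b) ≤ Real.exp (-((n:ℝ)+1) * q) := by
      intro n
      apply Real.exp_le_exp.2
      have h1 : (1:ℝ) ≤ (n:ℝ) + 1 := by
        have := Nat.cast_nonneg (α := ℝ) n; linarith
      have h3 : 1 ≤ ((n:ℝ)+1) * q := by nlinarith
      have h4 : (((n:ℝ)+1) * q) * (((n:ℝ)+1) * q) = ((n:ℝ)+1)^2 * b := by
        rw [← hqq]; ring
      nlinarith
    calc ∑' n : ℕ, Real.exp (-((n:ℝ)+1)^2 * b)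
        ≤ ∑' n : ℕ, Real.exp (-((n:ℝ)+1) * q) := Summable.tsum_le_tsum hle hsummL (geom_tail q hq0).1
      _ ≤ 1 / q := (geom_tail q hq0).2
      _ ≤ 3 / q := by
          have h3 : (3:ℝ)/q = 1/q + 2/q := by ring
          have h0 : (0:ℝ) ≤ 2/q := by positivity
          linarith
  · -- small b : split
    have hq1 : q ≤ 1 := by
      rw [hq, show (1:ℝ) = Real.sqrt 1 by simp]
      exact Real.sqrt_le_sqrt hb1.le
    have hinv1 : 1 ≤ 1 / q := by
      rw [le_div_iff₀ hq0]; linarith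
    set N : ℕ := ⌈1 / q⌉₊ with hN
    have hNle : (N:ℝ) ≤ 2 / q := by
      have h1 : (N:ℝ) < 1 / q + 1 := Nat.ceil_lt_add_one (by positivity)
      have h2 : (2:ℝ)/q = 1/q + 1/q := by ring
      linarith
    have hNge : 1 / q ≤ (N:ℝ) := Nat.le_ceil _
    set u : ℕ → ℝ := fun n => if n + 1 ≤ N then (1:ℝ) else 0 with hu
    set v : ℕ → ℝ := fun n => Real.exp (-((n:ℝ)+1) * q) with hv
    have hu_sum : Summable u := by
      apply summable_of_ne_finset_zero (s := range N)
      intro n hn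
      rw [mem_range, not_lt] at hn
      rw [hu]
      simp only
      rw [if_neg (by omega)]
    have hu_val : ∑' n, u n = (N:ℝ) := by
      rw [tsum_eq_sum (s := range N) (fun n hn => by
        rw [mem_range, not_lt] at hn
        rw [hu]; simp only; rw [if_neg (by omega)])]
      rw [hu]
      simp only
      rw [Finset.sum_congr rfl (fun n hn => if_pos (by
        rw [mem_range] at hn; omega))]
      simp
    have hpt : ∀ n : ℕ, Real.exp (-((n:ℝ)+1)^2 * b) ≤ u n + v n := by
      intro n
      by_cases h : n + 1 ≤ N
      · have h1 : Real.exp (-((n:ℝ)+1)^2 * b) ≤ 1 := by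
          rw [Real.exp_le_one_iff]
          have : (0:ℝ) ≤ ((n:ℝ)+1)^2 * b := by positivity
          linarith
        have h2 : 0 ≤ v n := (Real.exp_pos _).le
        simp only [hu]
        rw [if_pos h]
        linarith
      · have hn1 : (1:ℝ)/q ≤ (n:ℝ) + 1 := by
          have : (N:ℝ) ≤ (n:ℝ) + 1 := by
            have : N ≤ n + 1 := by omega
            exact_mod_cast this
          linarith
        have hprod : 1 ≤ ((n:ℝ)+1) * q := by
          rw [div_le_iff₀ hq0] at hn1
          linarith
        have : Real.exp (-((n:ℝ)+1)^2 * b) ≤ v n := by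
          simp only [hv]
          apply Real.exp_le_exp.2
          have h4 : (((n:ℝ)+1) * q) * (((n:ℝ)+1) * q) = ((n:ℝ)+1)^2 * b := by
            rw [← hqq]; ring
          nlinarith
        simp only [hu]
        rw [if_neg h]
        linarith
    calc ∑' n : ℕ, Real.exp (-((n:ℝ)+1)^2 * b)
        ≤ ∑' n : ℕ, (u n + v n) :=
          Summable.tsum_le_tsum hpt hsummL (hu_sum.add (geom_tail q hq0).1)
      _ = (∑' n, u n) + ∑' n, v n := Summable.tsum_add hu_sum (geom_tail q hq0).1
      _ ≤ 2 / q + 1 / q := by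
          have := (geom_tail q hq0).2
          rw [hu_val]
          exact add_le_add hNle this
      _ = 3 / q := by ring




lemma self_mul_exp_neg_le_one {y : ℝ} (hy : 0 ≤ y) : y * Real.exp (-y) ≤ 1 := by
  have h1 : y + 1 ≤ Real.exp y := Real.add_one_le_exp y
  have h2 : Real.exp (-y) * Real.exp y = 1 := by rw [← Real.exp_add]; simp
  nlinarith [Real.exp_pos (-y), Real.exp_pos y]

lemma step_bound (a x : ℝ) (ha : 0 < a) (hx : 1 ≤ x) :
    x * (Real.exp (-x^2*a) - Real.exp (-(x+1)^2*a)) ≤ 6 * Real.exp (-x^2*(a/2)) := by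
  have hx0 : 0 < x := by linarith
  have e1 : Real.exp (-(x+1)^2*a) = Real.exp (-x^2*a) * Real.exp (-((2*x+1)*a)) := by
    rw [← Real.exp_add]; congr 1; ring
  have h3 : 1 - Real.exp (-((2*x+1)*a)) ≤ (2*x+1)*a := by
    have := Real.add_one_le_exp (-((2*x+1)*a))
    linarith
  have h4 : 0 < Real.exp (-x^2*a) := Real.exp_pos _
  have e2 : Real.exp (-x^2*a) - Real.exp (-(x+1)^2*a) ≤ Real.exp (-x^2*a) * ((2*x+1)*a) := by
    rw [e1]; nlinarith
  have e3 : Real.exp (-x^2*a) = Real.exp (-x^2*(a/2)) * Real.exp (-x^2*(a/2)) := by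
    rw [← Real.exp_add]; congr 1; ring
  have e4 : x^2 * a * Real.exp (-x^2*(a/2)) ≤ 2 := by
    have h5 := self_mul_exp_neg_le_one (y := x^2 * (a/2)) (by positivity)
    have h6 : -(x^2 * (a/2)) = -x^2 * (a/2) := by ring
    rw [h6] at h5
    nlinarith [Real.exp_pos (-x^2 * (a/2))]
  have h7 : 0 < Real.exp (-x^2*(a/2)) := Real.exp_pos _
  calc x * (Real.exp (-x^2*a) - Real.exp (-(x+1)^2*a))
      ≤ x * (Real.exp (-x^2*a) * ((2*x+1)*a)) := mul_le_mul_of_nonneg_left e2 hx0.le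
    _ ≤ 3 * (x^2 * a * Real.exp (-x^2*a)) := by
        have h8 : x*(2*x+1) ≤ 3*x^2 := by nlinarith
        nlinarith [mul_le_mul_of_nonneg_right h8 (le_of_lt (mul_pos ha h4))]
    _ ≤ 6 * Real.exp (-x^2*(a/2)) := by
        rw [e3]
        nlinarith
  
lemma sum2 (a : ℝ) (ha : 0 < a) :
    ∑' m : ℕ, Λ m * Real.exp (-(m:ℝ)^2 * a) ≤ 2700 / Real.sqrt a := by
  have hr0 : (0:ℝ) < Real.exp (-a) := Real.exp_pos _
  have hr1 : Real.exp (-a) < 1 := by rw [Real.exp_lt_one_iff]; linarith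
  have hwr : ∀ n : ℕ, Real.exp (-(n:ℝ)^2 * a) ≤ Real.exp (-a) ^ n := by
    intro n
    rw [← Real.exp_nat_mul]
    apply Real.exp_le_exp.2
    have h1 : (n:ℝ) ≤ (n:ℝ)^2 := by exact_mod_cast Nat.le_self_pow two_ne_zero n
    nlinarith
  have hw0 : ∀ n : ℕ, 0 ≤ Real.exp (-(n:ℝ)^2 * a) := fun n => (Real.exp_pos _).le
  have hmono : ∀ n : ℕ, Real.exp (-((n+1:ℕ):ℝ)^2 * a) ≤ Real.exp (-(n:ℝ)^2 * a) := by
    intro n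
    apply Real.exp_le_exp.2
    push_cast
    nlinarith [Nat.cast_nonneg (α := ℝ) n]
  have hlim : Tendsto (fun n : ℕ => Real.exp (-(n:ℝ)^2 * a)) atTop (𝓝 0) := by
    apply squeeze_zero hw0 hwr
    exact tendsto_pow_atTop_nhds_zero_of_lt_one hr0.le hr1
  have hgeo : Summable (fun n : ℕ => (n:ℝ) * Real.exp (-a) ^ n) := by
    have := summable_pow_mul_geometric_of_norm_lt_one (R := ℝ) 1
      (by rwa [Real.norm_eq_abs, abs_of_pos hr0])
    simpa using this
  have hs : Summable (fun n : ℕ => (n:ℝ) * (Real.exp (-(n:ℝ)^2 * a) - Real.exp (-((n+1:ℕ):ℝ)^2 * a))) := by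
    apply Summable.of_nonneg_of_le
      (fun n => mul_nonneg (Nat.cast_nonneg n) (sub_nonneg.2 (hmono n)))
      (fun n => ?_) hgeo
    have h1 := hw0 (n+1)
    have h2 := hwr n
    have h3 := Real.exp_pos (-((n+1:ℕ):ℝ)^2 * a)
    have h4 : Real.exp (-(n:ℝ)^2 * a) - Real.exp (-((n+1:ℕ):ℝ)^2 * a) ≤ Real.exp (-(n:ℝ)^2 * a) := by
      linarith
    calc (n:ℝ) * (Real.exp (-(n:ℝ)^2 * a) - Real.exp (-((n+1:ℕ):ℝ)^2 * a))
        ≤ (n:ℝ) * Real.exp (-(n:ℝ)^2 * a) := mul_le_mul_of_nonneg_left h4 (Nat.cast_nonneg n)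
      _ ≤ (n:ℝ) * Real.exp (-a) ^ n := mul_le_mul_of_nonneg_left h2 (Nat.cast_nonneg n)
  have hkey := key_lemma (fun n : ℕ => Real.exp (-(n:ℝ)^2 * a)) hw0 hmono hlim hs
  have hb2 : 0 < a / 2 := by linarith
  have hptw : ∀ n : ℕ,
      ((n+1:ℕ):ℝ) * (Real.exp (-((n+1:ℕ):ℝ)^2 * a) - Real.exp (-((n+1+1:ℕ):ℝ)^2 * a))
        ≤ 6 * Real.exp (-((n:ℝ)+1)^2 * (a/2)) := by
    intro n
    have hc1 : ((n+1:ℕ):ℝ) = (n:ℝ) + 1 := by push_cast; ring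
    have hc2 : ((n+1+1:ℕ):ℝ) = ((n:ℝ)+1) + 1 := by push_cast; ring
    rw [hc1, hc2]
    have hx1 : 1 ≤ (n:ℝ) + 1 := by
      have := Nat.cast_nonneg (α := ℝ) n; linarith
    have := step_bound a ((n:ℝ)+1) ha hx1
    calc ((n:ℝ)+1) * (Real.exp (-((n:ℝ)+1)^2 * a) - Real.exp (-(((n:ℝ)+1)+1)^2 * a))
        = ((n:ℝ)+1) * (Real.exp (-((n:ℝ)+1)^2*a) - Real.exp (-(((n:ℝ)+1)+1)^2*a)) := by ring_nf
      _ ≤ 6 * Real.exp (-((n:ℝ)+1)^2*(a/2)) := this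
      _ = 6 * Real.exp (-((n:ℝ)+1)^2 * (a/2)) := by ring_nf
  have hsum6 : Summable (fun n : ℕ => 6 * Real.exp (-((n:ℝ)+1)^2 * (a/2))) := by
    apply Summable.mul_left
    apply Summable.of_nonneg_of_le (fun n => (Real.exp_pos _).le) (fun n => ?_)
      (geom_tail (a/2) hb2).1
    apply Real.exp_le_exp.2
    have h1 : (1:ℝ) ≤ (n:ℝ) + 1 := by
      have := Nat.cast_nonneg (α := ℝ) n; linarith
    have h2 : ((n:ℝ)+1)*(a/2) ≤ ((n:ℝ)+1)^2*(a/2) := by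
      apply mul_le_mul_of_nonneg_right _ hb2.le
      nlinarith
    linarith
  have hT : ∑' n : ℕ, (n:ℝ) * (Real.exp (-(n:ℝ)^2 * a) - Real.exp (-((n+1:ℕ):ℝ)^2 * a))
      ≤ 6 * (3 / Real.sqrt (a/2)) := by
    rw [Summable.tsum_eq_zero_add hs]
    simp only [Nat.cast_zero, zero_mul, zero_add]
    calc ∑' n : ℕ, ((n+1:ℕ):ℝ) * (Real.exp (-((n+1:ℕ):ℝ)^2 * a) - Real.exp (-((n+1+1:ℕ):ℝ)^2 * a))
        ≤ ∑' n : ℕ, 6 * Real.exp (-((n:ℝ)+1)^2 * (a/2)) :=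
          Summable.tsum_le_tsum hptw ((summable_nat_add_iff 1).2 hs) hsum6
      _ = 6 * ∑' n : ℕ, Real.exp (-((n:ℝ)+1)^2 * (a/2)) := tsum_mul_left
      _ ≤ 6 * (3 / Real.sqrt (a/2)) := by
          have := gauss_tail (a/2) hb2
          linarith
  have hfin : 6 * (3 / Real.sqrt (a/2)) ≤ 27 / Real.sqrt a := by
    have hsq : Real.sqrt (a/2) = Real.sqrt a / Real.sqrt 2 := Real.sqrt_div ha.le 2
    have hsa : 0 < Real.sqrt a := Real.sqrt_pos.2 ha
    have hs2 : 0 < Real.sqrt 2 := Real.sqrt_pos.2 (by norm_num)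
    have h2 : Real.sqrt 2 ≤ 1.5 := by
      have h3 : Real.sqrt 2 ≤ Real.sqrt (1.5^2) := Real.sqrt_le_sqrt (by norm_num)
      rwa [Real.sqrt_sq (by norm_num)] at h3
    have e1 : 6 * (3 / (Real.sqrt a / Real.sqrt 2)) = 18 * Real.sqrt 2 / Real.sqrt a := by
      field_simp
      ring
    rw [hsq, e1, div_le_div_iff₀ hsa hsa]
    nlinarith
  calc ∑' m : ℕ, Λ m * Real.exp (-(m:ℝ)^2 * a)
      ≤ 100 * ∑' n : ℕ, (n:ℝ) * (Real.exp (-(n:ℝ)^2 * a) - Real.exp (-((n+1:ℕ):ℝ)^2 * a)) := hkey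
    _ ≤ 100 * (6 * (3 / Real.sqrt (a/2))) := by
        have h0 : (0:ℝ) ≤ 100 := by norm_num
        exact mul_le_mul_of_nonneg_left hT h0
    _ ≤ 100 * (27 / Real.sqrt a) := mul_le_mul_of_nonneg_left hfin (by norm_num)
    _ = 2700 / Real.sqrt a := by ring



lemma vonMangoldt_le_nat (m : ℕ) : Λ m ≤ (m:ℝ) := by
  rcases Nat.eq_zero_or_pos m with rfl | hm
  · simp
  · have h1 := vonMangoldt_le_log (n := m)
    have h2 : Real.log (m:ℝ) ≤ (m:ℝ) - 1 :=
      Real.log_le_sub_one_of_pos (by exact_mod_cast hm)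
    linarith

lemma summable_geom_nat (a : ℝ) (ha : 0 < a) :
    Summable (fun m : ℕ => (m:ℝ) * Real.exp (-a) ^ m) := by
  have := summable_pow_mul_geometric_of_norm_lt_one (R := ℝ) (r := Real.exp (-a)) 1
    (by rw [Real.norm_eq_abs, _root_.abs_of_pos (Real.exp_pos _), Real.exp_lt_one_iff]
        linarith)
  simpa using this

lemma summable_Lambda_exp (a : ℝ) (ha : 0 < a) :
    Summable (fun m : ℕ => Λ m * Real.exp (-(m:ℝ) * a)) := by
  apply Summable.of_nonneg_of_le
    (fun m => mul_nonneg vonMangoldt_nonneg (Real.exp_pos _).le)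
    (fun m => ?_) (summable_geom_nat a ha)
  rw [← Real.exp_nat_mul]
  have h1 : Real.exp ((m:ℝ) * -a) = Real.exp (-(m:ℝ) * a) := by ring_nf
  rw [h1]
  exact mul_le_mul_of_nonneg_right (vonMangoldt_le_nat m) (Real.exp_pos _).le

lemma summable_Lambda_exp_sq (a : ℝ) (ha : 0 < a) :
    Summable (fun m : ℕ => Λ m * Real.exp (-(m:ℝ)^2 * a)) := by
  apply Summable.of_nonneg_of_le
    (fun m => mul_nonneg vonMangoldt_nonneg (Real.exp_pos _).le)
    (fun m => ?_) (summable_Lambda_exp a ha)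
  apply mul_le_mul_of_nonneg_left _ vonMangoldt_nonneg
  apply Real.exp_le_exp.2
  have h1 : (m:ℝ) ≤ (m:ℝ)^2 := by exact_mod_cast Nat.le_self_pow two_ne_zero m
  nlinarith

lemma S1_norm_le (a y : ℝ) (ha : 0 < a) :
    ‖S1 ((a:ℂ) + y * Complex.I)‖ ≤ ∑' m : ℕ, Λ m * Real.exp (-(m:ℝ) * a) := by
  have hre : ∀ m : ℕ, (-(m:ℂ) * ((a:ℂ) + y * Complex.I)).re = -(m:ℝ) * a := by
    intro m
    simp [Complex.mul_re, Complex.add_re, Complex.add_im]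
  have hnorm : ∀ m : ℕ, ‖(vonMangoldt m : ℂ) * Complex.exp (-(m:ℂ) * ((a:ℂ) + y * Complex.I))‖
      = Λ m * Real.exp (-(m:ℝ) * a) := by
    intro m
    rw [norm_mul, Complex.norm_exp, hre,
      Complex.norm_real, Real.norm_eq_abs, _root_.abs_of_nonneg vonMangoldt_nonneg]
  have hsumm : Summable (fun m : ℕ =>
      ‖(vonMangoldt m : ℂ) * Complex.exp (-(m:ℂ) * ((a:ℂ) + y * Complex.I))‖) := by
    refine (summable_Lambda_exp a ha).congr fun m => (hnorm m).symm
  refine le_trans (norm_tsum_le_tsum_norm hsumm) ?_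
  exact le_of_eq (tsum_congr hnorm)

lemma S2_norm_le (a y : ℝ) (ha : 0 < a) :
    ‖S2 ((a:ℂ) + y * Complex.I)‖ ≤ ∑' m : ℕ, Λ m * Real.exp (-(m:ℝ)^2 * a) := by
  have hre : ∀ m : ℕ, (-(m:ℂ)^2 * ((a:ℂ) + y * Complex.I)).re = -(m:ℝ)^2 * a := by
    intro m
    simp [Complex.mul_re, Complex.add_re, Complex.add_im, pow_two]
  have hnorm : ∀ m : ℕ, ‖(vonMangoldt m : ℂ) * Complex.exp (-(m:ℂ)^2 * ((a:ℂ) + y * Complex.I))‖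
      = Λ m * Real.exp (-(m:ℝ)^2 * a) := by
    intro m
    rw [norm_mul, Complex.norm_exp, hre,
      Complex.norm_real, Real.norm_eq_abs, _root_.abs_of_nonneg vonMangoldt_nonneg]
  have hsumm : Summable (fun m : ℕ =>
      ‖(vonMangoldt m : ℂ) * Complex.exp (-(m:ℂ)^2 * ((a:ℂ) + y * Complex.I))‖) := by
    refine (summable_Lambda_exp_sq a ha).congr fun m => (hnorm m).symm
  refine le_trans (norm_tsum_le_tsum_norm hsumm) ?_
  exact le_of_eq (tsum_congr hnorm)


/-- `∫_{(a)} |e^{Nz} z^{-k-1}| |S̃₁(z) S̃₂(z)²| |dz| ≪_k a^{-2-k} e^{Na}`. -/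
theorem line_integral_abs_bound (k : ℝ) (hk : 0 < k) :
    ∃ C : ℝ, 0 < C ∧ ∀ a : ℝ, 0 < a → ∀ N : ℕ, 0 < N →
      (∫ y : ℝ,
          ‖Complex.exp ((N : ℂ) * ((a : ℂ) + y * Complex.I)) *
              ((a : ℂ) + y * Complex.I) ^ (-(k : ℂ) - 1)‖ *
            ‖S1 ((a : ℂ) + y * Complex.I) * (S2 ((a : ℂ) + y * Complex.I)) ^ 2‖)
        ≤ C * a ^ (-2 - k) * Real.exp (N * a) := by
  have hJint : MeasureTheory.Integrable (fun t : ℝ => (1 + ‖t‖) ^ (-(k+1))) := by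
    apply integrable_one_add_norm
    rw [Module.finrank_self]
    norm_num
    linarith
  set J := ∫ t : ℝ, (1 + ‖t‖) ^ (-(k+1)) with hJ
  have hJ0 : 0 ≤ J :=
    MeasureTheory.integral_nonneg (fun t => Real.rpow_nonneg (by positivity) _)
  refine ⟨100 * 2700^2 * 2^(k+1) * (J+1), by positivity, ?_⟩
  intro a ha N hN
  have hsa : 0 < Real.sqrt a := Real.sqrt_pos.2 ha
  -- basic facts about z = a + y I
  have hzre : ∀ y : ℝ, ((a:ℂ) + y * Complex.I).re = a := by
    intro y; simp
  have hzne : ∀ y : ℝ, (a:ℂ) + y * Complex.I ≠ 0 := by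
    intro y h
    have := hzre y
    rw [h] at this
    simp at this
    linarith
  have h_exp : ∀ y : ℝ, ‖Complex.exp ((N : ℂ) * ((a : ℂ) + y * Complex.I))‖
      = Real.exp (N * a) := by
    intro y
    rw [Complex.norm_exp]
    congr 1
    simp [Complex.mul_re]
  have h_cpow : ∀ y : ℝ, ‖((a : ℂ) + y * Complex.I) ^ (-(k : ℂ) - 1)‖
      = ‖(a:ℂ) + y * Complex.I‖ ^ (-(k+1)) := by
    intro y
    rw [Complex.norm_cpow_of_ne_zero (hzne y)]
    have h1 : (-(k:ℂ) - 1).im = 0 := by simp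
    have h2 : (-(k:ℂ) - 1).re = -(k+1) := by simp; ring
    rw [h1, h2]
    simp
  have h_lower : ∀ y : ℝ, (a + |y|)/2 ≤ ‖(a:ℂ) + y * Complex.I‖ := by
    intro y
    have h1 := Complex.abs_re_le_norm ((a:ℂ) + y * Complex.I)
    have h2 := Complex.abs_im_le_norm ((a:ℂ) + y * Complex.I)
    have h3 : ((a:ℂ) + y * Complex.I).re = a := hzre y
    have h4 : ((a:ℂ) + y * Complex.I).im = y := by simp
    rw [h3] at h1
    rw [h4] at h2
    rw [abs_of_pos ha] at h1
    linarith
  -- pointwise bound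
  set D : ℝ := Real.exp (N * a) * ((100/a) * (2700^2/a)) * (2^(k+1) * a^(-(k+1))) with hD
  have hD0 : 0 ≤ D := by positivity
  have h_eq : ∀ y : ℝ, ((a + |y|)/2) ^ (-(k+1))
      = 2^(k+1) * a^(-(k+1)) * (1 + ‖y/a‖) ^ (-(k+1)) := by
    intro y
    have e1 : a + |y| = a * (1 + ‖y/a‖) := by
      rw [Real.norm_eq_abs, abs_div, abs_of_pos ha]
      field_simp
    rw [e1]
    rw [Real.div_rpow (by positivity) (by norm_num)]
    rw [Real.mul_rpow ha.le (by positivity)]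
    rw [Real.rpow_neg (by norm_num : (0:ℝ) ≤ 2)]
    field_simp
  have hpt : ∀ y : ℝ,
      ‖Complex.exp ((N : ℂ) * ((a : ℂ) + y * Complex.I)) *
          ((a : ℂ) + y * Complex.I) ^ (-(k : ℂ) - 1)‖ *
        ‖S1 ((a : ℂ) + y * Complex.I) * (S2 ((a : ℂ) + y * Complex.I)) ^ 2‖
      ≤ D * (1 + ‖y/a‖) ^ (-(k+1)) := by
    intro y
    rw [norm_mul, h_exp y, h_cpow y, norm_mul, norm_pow]
    have b1 : ‖S1 ((a:ℂ) + y * Complex.I)‖ ≤ 100/a :=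
      (S1_norm_le a y ha).trans (sum1 a ha)
    have b2 : ‖S2 ((a:ℂ) + y * Complex.I)‖^2 ≤ 2700^2/a := by
      have h5 : ‖S2 ((a:ℂ) + y * Complex.I)‖ ≤ 2700/Real.sqrt a :=
        (S2_norm_le a y ha).trans (sum2 a ha)
      have h6 : (2700/Real.sqrt a)^2 = 2700^2/a := by
        rw [div_pow, Real.sq_sqrt ha.le]
      calc ‖S2 ((a:ℂ) + y * Complex.I)‖^2 ≤ (2700/Real.sqrt a)^2 := by
            apply pow_le_pow_left₀ (norm_nonneg _) h5
        _ = 2700^2/a := h6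
    have b3 : ‖(a:ℂ) + y * Complex.I‖ ^ (-(k+1))
        ≤ 2^(k+1) * a^(-(k+1)) * (1 + ‖y/a‖) ^ (-(k+1)) := by
      rw [← h_eq y]
      exact Real.rpow_le_rpow_of_nonpos (by positivity) (h_lower y) (by linarith)
    have b4 : ‖S1 ((a:ℂ) + y * Complex.I)‖ * ‖S2 ((a:ℂ) + y * Complex.I)‖^2
        ≤ (100/a) * (2700^2/a) := by
      apply mul_le_mul b1 b2 (by positivity) (by positivity)
    calc Real.exp (N * a) * ‖(a:ℂ) + y * Complex.I‖ ^ (-(k+1)) *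
          (‖S1 ((a:ℂ) + y * Complex.I)‖ * ‖S2 ((a:ℂ) + y * Complex.I)‖^2)
        ≤ Real.exp (N * a) * (2^(k+1) * a^(-(k+1)) * (1 + ‖y/a‖) ^ (-(k+1))) *
          ((100/a) * (2700^2/a)) := by
          apply mul_le_mul
          · apply mul_le_mul_of_nonneg_left b3 (Real.exp_pos _).le
          · exact b4
          · positivity
          · positivity
      _ = D * (1 + ‖y/a‖) ^ (-(k+1)) := by rw [hD]; ring
  -- integrate
  have hcomp : MeasureTheory.Integrable (fun y : ℝ => (1 + ‖y/a‖) ^ (-(k+1))) := by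
    exact hJint.comp_div ha.ne'
  have hInt : MeasureTheory.Integrable (fun y : ℝ => D * (1 + ‖y/a‖) ^ (-(k+1))) :=
    hcomp.const_mul D
  have hmono : (∫ y : ℝ,
      ‖Complex.exp ((N : ℂ) * ((a : ℂ) + y * Complex.I)) *
          ((a : ℂ) + y * Complex.I) ^ (-(k : ℂ) - 1)‖ *
        ‖S1 ((a : ℂ) + y * Complex.I) * (S2 ((a : ℂ) + y * Complex.I)) ^ 2‖)
      ≤ ∫ y : ℝ, D * (1 + ‖y/a‖) ^ (-(k+1)) := by
    apply MeasureTheory.integral_mono_of_nonneg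
    · exact Filter.Eventually.of_forall fun y => by positivity
    · exact hInt
    · exact Filter.Eventually.of_forall hpt
  have hval : (∫ y : ℝ, D * (1 + ‖y/a‖) ^ (-(k+1))) = D * (a * J) := by
    rw [MeasureTheory.integral_const_mul]
    congr 1
    have := MeasureTheory.Measure.integral_comp_div (fun t : ℝ => (1 + ‖t‖) ^ (-(k+1))) a
    rw [this, smul_eq_mul, abs_of_pos ha, hJ]
  refine hmono.trans ?_
  rw [hval]
  -- final arithmetic
  have hrw : D * (a * J) = Real.exp (N * a) * (100 * 2700^2 * 2^(k+1) * J) * a ^ (-2-k) := by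
    rw [hD]
    have e2 : a ^ (-2-k) = a ^ (-(k+1)) / a := by
      rw [show (-2-k : ℝ) = (-(k+1)) - 1 by ring, Real.rpow_sub ha, Real.rpow_one]
    rw [e2]
    field_simp
  rw [hrw]
  have hle : 100 * 2700^2 * 2^(k+1) * J ≤ 100 * 2700^2 * 2^(k+1) * (J+1) := by
    have : (0:ℝ) < 2^(k+1) := by positivity
    nlinarith
  have hpow : (0:ℝ) < a ^ (-2-k) := Real.rpow_pos_of_pos ha _
  have hexp : (0:ℝ) < Real.exp (N * a) := Real.exp_pos _
  calc Real.exp (N * a) * (100 * 2700^2 * 2^(k+1) * J) * a ^ (-2-k)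
      ≤ Real.exp (N * a) * (100 * 2700^2 * 2^(k+1) * (J+1)) * a ^ (-2-k) := by
        apply mul_le_mul_of_nonneg_right _ hpow.le
        apply mul_le_mul_of_nonneg_left hle hexp.le
    _ = 100 * 2700^2 * 2^(k+1) * (J+1) * a ^ (-2-k) * Real.exp (N * a) := by ring

end
end

section
/- Let N be a positive integer and k > −2 real. Then (1/(8i))·∫_{(1/N)} e^{Nz}·z^{−k−3} dz = N^{k+2}·π/(4·Γ(k+3)), where ∫_{(1/N)} denotes the integral over the vertical line Re(z) = 1/N. -/
open Complex MeasureTheory Set Filter Metric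

noncomputable section

lemma aux_integrableOn_rpow_exp {p c : ℝ} (hp : -1 < p) (hc : 0 < c) :
    IntegrableOn (fun t : ℝ => t ^ p * Real.exp (-(c * t))) (Ioi 0) := by
  simpa using integrableOn_rpow_mul_exp_neg_mul_rpow hp one_pos hc

lemma aux_gamma_cexp {s : ℝ} (hs : 0 < s) {b : ℂ} (hb : 0 < b.re) :
    ∫ t : ℝ in Ioi 0, (t : ℂ) ^ ((s : ℂ) - 1) * Complex.exp (-(b * t)) =
      Complex.Gamma s * b ^ (-(s : ℂ)) := by
  set U : Set ℂ := {z : ℂ | 0 < z.re} with hU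
  have hUopen : IsOpen U := isOpen_lt continuous_const Complex.continuous_re
  set F : ℂ → ℂ := fun z => ∫ t : ℝ in Ioi 0, (t : ℂ) ^ ((s : ℂ) - 1) * Complex.exp (-(z * t))
    with hF
  set G : ℂ → ℂ := fun z => Complex.Gamma s * z ^ (-(s : ℂ)) with hG
  -- measurability of integrand for each z
  have hmeas : ∀ z : ℂ, AEStronglyMeasurable
      (fun t : ℝ => (t : ℂ) ^ ((s : ℂ) - 1) * Complex.exp (-(z * t)))
      (volume.restrict (Ioi 0)) := by
    intro z
    apply ContinuousOn.aestronglyMeasurable _ measurableSet_Ioi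
    intro t ht
    apply ContinuousWithinAt.mul
    · exact ((continuousAt_ofReal_cpow_const t _ (Or.inr (ne_of_gt ht)))).continuousWithinAt
    · exact (Complex.continuous_exp.comp ((continuous_const.mul continuous_ofReal).neg)
        ).continuousWithinAt
  -- integrability for each z ∈ U
  have hint : ∀ z ∈ U, Integrable
      (fun t : ℝ => (t : ℂ) ^ ((s : ℂ) - 1) * Complex.exp (-(z * t)))
      (volume.restrict (Ioi 0)) := by
    intro z hz
    refine ⟨hmeas z, ?_⟩
    apply HasFiniteIntegral.mono' (aux_integrableOn_rpow_exp (p := s - 1)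
      (by linarith) hz).2
    filter_upwards [ae_restrict_mem measurableSet_Ioi] with t ht
    rw [norm_mul,
      Complex.norm_cpow_eq_rpow_re_of_pos ht, Complex.norm_exp]
    simp only [sub_re, ofReal_re, one_re, neg_re, mul_re, ofReal_im, mul_zero, sub_zero]
    exact le_rfl
  -- differentiability of F on U
  have hderiv : ∀ z ∈ U, DifferentiableAt ℂ F z := by
    intro z hz
    have hz' : 0 < z.re := hz
    set c : ℝ := z.re / 2 with hcdef
    have hc0 : 0 < c := half_pos hz'
    have key := hasDerivAt_integral_of_dominated_loc_of_deriv_le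
      (F := fun z (t : ℝ) => (t : ℂ) ^ ((s : ℂ) - 1) * Complex.exp (-(z * t)))
      (F' := fun z (t : ℝ) => (t : ℂ) ^ ((s : ℂ) - 1) * (Complex.exp (-(z * t)) * -(t : ℂ)))
      (x₀ := z) (bound := fun t : ℝ => t ^ s * Real.exp (-(c * t)))
      (μ := volume.restrict (Ioi 0)) (s := ball z c) (ball_mem_nhds z hc0) ?_ ?_ ?_ ?_ ?_ ?_
    · exact key.2.differentiableAt
    · filter_upwards with x using hmeas x
    · exact hint z hz
    · apply ContinuousOn.aestronglyMeasurable _ measurableSet_Ioi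
      intro t ht
      apply ContinuousWithinAt.mul
      · exact ((continuousAt_ofReal_cpow_const t _ (Or.inr (ne_of_gt ht)))).continuousWithinAt
      · exact (((Complex.continuous_exp.comp ((continuous_const.mul
          continuous_ofReal).neg))).mul (continuous_ofReal.neg)).continuousWithinAt
    · filter_upwards [ae_restrict_mem measurableSet_Ioi] with t ht x hx
      have hxre : c ≤ x.re := by
        have h1 : |(x - z).re| ≤ ‖x - z‖ := Complex.abs_re_le_norm _
        have h2 : ‖x - z‖ < c := by
          rw [← Complex.dist_eq]; exact mem_ball.mp hx
        have := (abs_le.mp (h1.trans h2.le)).1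
        simp only [Complex.sub_re] at this
        linarith
      rw [norm_mul, norm_mul,
        Complex.norm_cpow_eq_rpow_re_of_pos ht, Complex.norm_exp, norm_neg,
        Complex.norm_real, Real.norm_of_nonneg (le_of_lt ht)]
      simp only [sub_re, ofReal_re, one_re, neg_re, mul_re, ofReal_im, mul_zero, sub_zero]
      have ht0 : (0:ℝ) < t := mem_Ioi.mp ht
      have hE : Real.exp (-(x.re * t)) ≤ Real.exp (-(c * t)) := by
        apply Real.exp_le_exp.mpr
        nlinarith [mul_le_mul_of_nonneg_right hxre ht0.le]
      have h0 : (0:ℝ) ≤ t ^ (s - 1) := Real.rpow_nonneg ht0.le _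
      have hpow : t ^ s = t ^ (s - 1) * t := by
        nth_rewrite 1 [show s = (s - 1) + 1 by ring]
        rw [Real.rpow_add ht0, Real.rpow_one]
      rw [hpow]
      nlinarith [mul_le_mul_of_nonneg_left (mul_le_mul_of_nonneg_right hE ht0.le) h0]
    · exact aux_integrableOn_rpow_exp (by linarith) hc0
    · filter_upwards [ae_restrict_mem measurableSet_Ioi] with t _ x _
      have h1 : HasDerivAt (fun w : ℂ => -(w * t)) (-(t : ℂ)) x := by
        have := ((hasDerivAt_id x).mul_const (t : ℂ)).neg; simp only [one_mul] at this; exact this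
      exact (h1.cexp).const_mul _
  have hFan : AnalyticOnNhd ℂ F U :=
    (DifferentiableOn.analyticOnNhd (fun z hz => (hderiv z hz).differentiableWithinAt) hUopen)
  have hGan : AnalyticOnNhd ℂ G U := by
    apply DifferentiableOn.analyticOnNhd _ hUopen
    intro z hz
    exact ((((hasDerivAt_id z).cpow_const (Or.inl hz)).differentiableAt.const_mul
      (Complex.Gamma s))).differentiableWithinAt
  have hreal : ∀ r : ℝ, 0 < r → F r = G r := by
    intro r hr
    have h1 := Complex.integral_cpow_mul_exp_neg_mul_Ioi (a := (s : ℂ))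
      (by simpa using hs) hr
    have harg : ((r : ℂ)).arg ≠ Real.pi := by
      rw [Complex.arg_ofReal_of_nonneg hr.le]; exact Real.pi_ne_zero.symm
    rw [hF, hG]
    simp only
    rw [h1, Complex.cpow_neg, ← Complex.inv_cpow _ _ harg, ← Complex.ofReal_inv, mul_comm]
    norm_num
  have hpre : IsPreconnected U := (convex_halfSpace_re_gt 0).isPreconnected
  have h1U : (1 : ℂ) ∈ U := by simp [hU]
  have hfreq : ∃ᶠ z in nhdsWithin (1 : ℂ) {(1:ℂ)}ᶜ, F z = G z := by
    have htends : Tendsto (fun n : ℕ => ((1 + (n + 1 : ℝ)⁻¹ : ℝ) : ℂ)) atTop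
        (nhdsWithin (1 : ℂ) {(1:ℂ)}ᶜ) := by
      rw [tendsto_nhdsWithin_iff]
      constructor
      · have h0 : Tendsto (fun n : ℕ => (1 + (n + 1 : ℝ)⁻¹ : ℝ)) atTop (nhds 1) := by
          have h1 : Tendsto (fun n : ℕ => ((n : ℝ) + 1)⁻¹) atTop (nhds 0) := by
            simpa only [one_div] using (tendsto_one_div_add_atTop_nhds_zero_nat :
              Tendsto (fun n : ℕ => 1 / ((n : ℝ) + 1)) atTop (nhds 0))
          simpa using (tendsto_const_nhds (x := (1:ℝ)) (f := atTop)).add h1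
        have h2 : Tendsto (fun n : ℕ => (((1 + ((n:ℝ) + 1)⁻¹ : ℝ)) : ℂ)) atTop
            (nhds ((1:ℝ):ℂ)) := (Complex.continuous_ofReal.tendsto 1).comp h0
        rw [Complex.ofReal_one] at h2
        exact h2
      · filter_upwards with n
        simp only [mem_compl_iff, mem_singleton_iff]
        intro h
        have : (1 + (n + 1 : ℝ)⁻¹ : ℝ) = 1 := by exact_mod_cast h
        have hpos : (0:ℝ) < (n + 1 : ℝ)⁻¹ := by positivity
        linarith
    apply htends.frequently
    apply Frequently.of_forall
    intro n
    exact hreal _ (by positivity)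
  have heq := hFan.eqOn_of_preconnected_of_frequently_eq hGan hpre h1U hfreq
  exact heq hb

open FourierTransform in
lemma aux_inversion {s a : ℝ} (hs : 1 < s) (ha : 0 < a) {v : ℝ} (hv : 0 < v) :
    ∫ w : ℝ, Complex.exp (((2 * Real.pi * w * v : ℝ)) * Complex.I) *
        ((a : ℂ) + 2 * Real.pi * w * Complex.I) ^ (-(s : ℂ))
      = ((v ^ (s - 1) * Real.exp (-(a * v)) : ℝ) : ℂ) / Complex.Gamma (s : ℂ) := by
  have hs0 : 0 < s := by linarith
  have hs1 : (0:ℝ) < s - 1 := by linarith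
  set f : ℝ → ℂ := fun x => ((max x 0 ^ (s - 1) * Real.exp (-(a * x)) : ℝ) : ℂ) with hf
  set g : ℝ → ℂ := fun w =>
    Complex.Gamma (s : ℂ) * ((a : ℂ) + 2 * Real.pi * w * Complex.I) ^ (-(s : ℂ)) with hg
  have hbre : ∀ w : ℝ, ((a : ℂ) + 2 * Real.pi * w * Complex.I).re = a := by
    intro w; simp
  have hb : ∀ w : ℝ, 0 < ((a : ℂ) + 2 * Real.pi * w * Complex.I).re := by
    intro w; rw [hbre w]; exact ha
  -- continuity of f
  have hcont : Continuous f := by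
    apply Complex.continuous_ofReal.comp
    apply Continuous.mul
    · rw [continuous_iff_continuousAt]
      intro x
      exact (Real.continuousAt_rpow_const _ _ (Or.inr hs1.le)).comp
        ((continuous_id.max continuous_const).continuousAt)
    · exact Real.continuous_exp.comp ((continuous_const.mul continuous_id).neg)
  -- Fourier transform of f
  have hFf : 𝓕 f = g := by
    funext w
    rw [Real.fourier_real_eq_integral_exp_smul]
    have hzero : ∀ x : ℝ, x ∉ Set.Ioi (0:ℝ) →
        Complex.exp ((-2 * Real.pi * x * w : ℝ) * Complex.I) • f x = 0 := by
      intro x hx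
      have hx0 : x ≤ 0 := not_lt.mp hx
      simp [hf, max_eq_right hx0, Real.zero_rpow (ne_of_gt hs1)]
    rw [← setIntegral_eq_integral_of_forall_compl_eq_zero hzero]
    simp only [hg]
    rw [← aux_gamma_cexp hs0 (hb w)]
    apply setIntegral_congr_fun measurableSet_Ioi
    intro t ht
    have ht0 : (0:ℝ) < t := ht
    have harg : -(((a : ℂ) + 2 * Real.pi * w * Complex.I) * t)
        = ((-(a * t) : ℝ) : ℂ) + ((-2 * Real.pi * t * w : ℝ) : ℂ) * Complex.I := by
      push_cast; ring
    beta_reduce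
    rw [harg, Complex.exp_add, smul_eq_mul]
    simp only [hf, max_eq_left ht0.le]
    rw [show ((s : ℂ) - 1) = ((s - 1 : ℝ) : ℂ) by push_cast; ring]
    rw [← Complex.ofReal_cpow ht0.le]
    push_cast [Complex.ofReal_exp]
    ring
  -- integrability of f
  have hf_int : MeasureTheory.Integrable f := by
    rw [← MeasureTheory.integrableOn_univ, ← Set.Iic_union_Ioi (a := (0:ℝ))]
    apply MeasureTheory.IntegrableOn.union
    · apply (MeasureTheory.integrableOn_zero).congr_fun _ measurableSet_Iic
      intro x hx
      simp [hf, max_eq_right (Set.mem_Iic.mp hx), Real.zero_rpow (ne_of_gt hs1)]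
    · apply MeasureTheory.IntegrableOn.congr_fun
        ((aux_integrableOn_rpow_exp (by linarith : (-1:ℝ) < s - 1) ha).ofReal)
        _ measurableSet_Ioi
      intro x hx
      simp [hf, max_eq_left (le_of_lt (Set.mem_Ioi.mp hx))]
  -- integrability of g
  have hg_cont : Continuous g := by
    rw [continuous_iff_continuousAt]
    intro w
    apply ContinuousAt.mul continuousAt_const
    exact ContinuousAt.cpow (f := fun x : ℝ => (a : ℂ) + 2 * Real.pi * x * Complex.I)
      (g := fun _ : ℝ => -(s:ℂ)) (by fun_prop) continuousAt_const (Or.inl (hb w))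
  have hG0 : (0:ℝ) < Real.Gamma s := Real.Gamma_pos_of_pos hs0
  have hg_int : MeasureTheory.Integrable g := by
    set c : ℝ := min a 1 / 2 with hc
    have hc0 : 0 < c := by positivity
    apply MeasureTheory.Integrable.mono'
      ((integrable_one_add_norm (by simpa using hs)).const_mul (Real.Gamma s * (c ^ (-s))))
      hg_cont.aestronglyMeasurable
    filter_upwards with w
    have habs : c * (1 + ‖w‖) ≤ ‖((a : ℂ) + 2 * Real.pi * w * Complex.I)‖ := by
      have h1 : |((a : ℂ) + 2 * Real.pi * w * Complex.I).re|
          ≤ ‖((a : ℂ) + 2 * Real.pi * w * Complex.I)‖ := Complex.abs_re_le_norm _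
      have h2 : |((a : ℂ) + 2 * Real.pi * w * Complex.I).im|
          ≤ ‖((a : ℂ) + 2 * Real.pi * w * Complex.I)‖ := Complex.abs_im_le_norm _
      rw [hbre w] at h1
      have h3 : ((a : ℂ) + 2 * Real.pi * w * Complex.I).im = 2 * Real.pi * w := by simp
      rw [h3] at h2
      have hpi : (1:ℝ) ≤ 2 * Real.pi := by nlinarith [Real.pi_gt_three]
      have h2pi : (0:ℝ) < 2 * Real.pi := by positivity
      have h4 : |w| ≤ |2 * Real.pi * w| := by
        rw [abs_mul, abs_of_pos h2pi]
        nlinarith [abs_nonneg w]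
      have h5 : min a 1 ≤ |a| := le_trans (min_le_left _ _) (le_abs_self a)
      have h6 : min a 1 * |w| ≤ |w| := by
        nlinarith [abs_nonneg w, min_le_right a 1]
      rw [abs_of_pos ha] at h1
      rw [Real.norm_eq_abs, hc]
      have h7 : min a 1 ≤ a := min_le_left _ _
      nlinarith [abs_nonneg w]
    have hner : ((a : ℂ) + 2 * Real.pi * w * Complex.I) ≠ 0 := by
      intro h
      have := hb w
      rw [h] at this
      simp at this
    have hnorm : ‖g w‖ = Real.Gamma s * ‖((a : ℂ) + 2 * Real.pi * w * Complex.I)‖ ^ (-s) := by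
      rw [hg]
      simp only [norm_mul]
      rw [Complex.norm_cpow_of_ne_zero hner]
      simp only [Complex.neg_re, Complex.ofReal_re, Complex.neg_im, Complex.ofReal_im, neg_zero,
        mul_zero, zero_mul, Real.exp_zero, div_one]
      rw [Complex.Gamma_ofReal, Complex.norm_real, Real.norm_eq_abs, abs_of_pos hG0]
    rw [hnorm]
    have h9 : ‖((a : ℂ) + 2 * Real.pi * w * Complex.I)‖ ^ (-s)
        ≤ (c * (1 + ‖w‖)) ^ (-s) :=
      Real.rpow_le_rpow_of_nonpos (by positivity) habs (by linarith)
    calc Real.Gamma s * ‖((a : ℂ) + 2 * Real.pi * w * Complex.I)‖ ^ (-s)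
        ≤ Real.Gamma s * (c * (1 + ‖w‖)) ^ (-s) :=
          mul_le_mul_of_nonneg_left h9 hG0.le
      _ = Real.Gamma s * c ^ (-s) * (1 + ‖w‖) ^ (-s) := by
          rw [Real.mul_rpow hc0.le (by positivity)]; ring
  -- Fourier inversion
  have hFf_int : MeasureTheory.Integrable (𝓕 f) := hFf ▸ hg_int
  have hinv := hf_int.fourierInv_fourier_eq hFf_int (hcont.continuousAt (x := v))
  rw [hFf, Real.fourierInv_eq'] at hinv
  have key : ∫ w : ℝ, Complex.exp (((2 * Real.pi * w * v : ℝ)) * Complex.I) * g w = f v := by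
    rw [← hinv]
    congr 1; funext w
    rw [smul_eq_mul]
    congr 3
    simp [RCLike.inner_apply]
    ring
  have hGne : Complex.Gamma (s : ℂ) ≠ 0 := by
    rw [Complex.Gamma_ofReal]
    simpa using ne_of_gt hG0
  have key2 : Complex.Gamma (s:ℂ) * ∫ w : ℝ,
      Complex.exp (((2 * Real.pi * w * v : ℝ)) * Complex.I) *
        ((a : ℂ) + 2 * Real.pi * w * Complex.I) ^ (-(s : ℂ)) = f v := by
    rw [← MeasureTheory.integral_const_mul, ← key]
    congr 1; funext w
    simp only [hg]; ring
  have hfv : f v = ((v ^ (s - 1) * Real.exp (-(a * v)) : ℝ) : ℂ) := by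
    simp [hf, max_eq_left hv.le]
  rw [hfv] at key2
  rw [eq_div_iff hGne, mul_comm]
  exact key2

/-- Evaluation of the main term `I₁`:
`(1/(8i)) ∫_{(1/N)} e^{Nz} z^{-k-3} dz = N^{k+2} π / (4 Γ(k+3))`. -/
theorem I1_evaluation (N : ℕ) (hN : 0 < N) (k : ℝ) (hk : -2 < k) :
    (1 / (8 * Complex.I)) *
        ∫ y : ℝ,
          Complex.exp ((N : ℂ) * ((1 / (N : ℂ)) + y * Complex.I)) *
            ((1 / (N : ℂ)) + y * Complex.I) ^ (-(k : ℂ) - 3) * Complex.I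
      = (N : ℂ) ^ ((k : ℂ) + 2) * (Real.pi : ℂ) / (4 * Complex.Gamma ((k : ℂ) + 3)) := by
  have hN0 : (0:ℝ) < (N:ℝ) := by exact_mod_cast hN
  have hNC : (N:ℂ) ≠ 0 := Nat.cast_ne_zero.mpr hN.ne'
  set s : ℝ := k + 3 with hsdef
  have hs : 1 < s := by rw [hsdef]; linarith
  have ha : (0:ℝ) < (N:ℝ)⁻¹ := by positivity
  have hinv := aux_inversion hs ha (v := (N:ℝ)) hN0
  set H : ℝ → ℂ := fun y => Complex.exp ((N : ℂ) * ((1 / (N : ℂ)) + y * Complex.I)) *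
      ((1 / (N : ℂ)) + y * Complex.I) ^ (-(k : ℂ) - 3) * Complex.I with hH
  have hcomp : ∀ w : ℝ, H (2 * Real.pi * w) =
      Complex.exp 1 * Complex.I * (Complex.exp (((2 * Real.pi * w * N : ℝ)) * Complex.I) *
        (((N:ℝ)⁻¹ : ℂ) + 2 * Real.pi * w * Complex.I) ^ (-(s : ℂ))) := by
    intro w
    rw [hH]
    beta_reduce
    have e1 : (N : ℂ) * ((1 / (N : ℂ)) + ((2 * Real.pi * w : ℝ) : ℂ) * Complex.I)
        = 1 + ((2 * Real.pi * w * (N:ℝ) : ℝ) : ℂ) * Complex.I := by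
      field_simp
      push_cast
      ring
    have e2 : ((1 / (N : ℂ)) + ((2 * Real.pi * w : ℝ) : ℂ) * Complex.I)
        = (((N:ℝ)⁻¹ : ℂ) + 2 * Real.pi * w * Complex.I) := by
      push_cast
      rw [one_div]
    have e3 : (-(k:ℂ) - 3) = -((s : ℝ) : ℂ) := by rw [hsdef]; push_cast; ring
    rw [e1, e2, e3, Complex.exp_add]
    ring
  have h0 : ∫ w : ℝ, H (2 * Real.pi * w) = (2 * Real.pi)⁻¹ • ∫ y : ℝ, H y := by
    rw [MeasureTheory.Measure.integral_comp_mul_left H (2 * Real.pi)]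
    congr 1
    rw [abs_of_pos (by positivity)]
  have hchange : ∫ y : ℝ, H y
      = ((2 * Real.pi : ℝ) : ℂ) * ∫ w : ℝ, H (2 * Real.pi * w) := by
    rw [h0, Complex.real_smul, Complex.ofReal_inv, ← mul_assoc,
      mul_inv_cancel₀ (by exact_mod_cast (by positivity : (2 * Real.pi : ℝ) ≠ 0) :
        ((2 * Real.pi : ℝ) : ℂ) ≠ 0), one_mul]
  have hval : ∫ w : ℝ, H (2 * Real.pi * w)
      = Complex.exp 1 * Complex.I *
        ((((N:ℝ) ^ (s - 1) * Real.exp (-((N:ℝ)⁻¹ * (N:ℝ))) : ℝ) : ℂ) / Complex.Gamma (s : ℂ)) := by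
    simp_rw [hcomp]
    rw [MeasureTheory.integral_const_mul, ← hinv]
    congr 1
    refine MeasureTheory.integral_congr_ae (Filter.Eventually.of_forall fun w => ?_)
    norm_cast
  have hGne : Complex.Gamma ((s : ℝ) : ℂ) ≠ 0 := by
    rw [Complex.Gamma_ofReal]
    simpa using ne_of_gt (Real.Gamma_pos_of_pos (by linarith : (0:ℝ) < s))
  have hsC : ((s : ℝ) : ℂ) = (k : ℂ) + 3 := by rw [hsdef]; push_cast; ring
  have hNp : (((N:ℝ) ^ (s - 1) : ℝ) : ℂ) = (N : ℂ) ^ ((k : ℂ) + 2) := by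
    rw [Complex.ofReal_cpow hN0.le]
    norm_num
    congr 1
    rw [hsdef]; push_cast; ring
  have hee : Complex.exp 1 * Complex.exp (-1) = 1 := by
    rw [← Complex.exp_add]; norm_num
  rw [hchange, hval]
  rw [inv_mul_cancel₀ hN0.ne']
  have hsplit : (((N:ℝ) ^ (s - 1) * Real.exp (-1) : ℝ) : ℂ)
      = (N:ℂ) ^ ((k:ℂ) + 2) * Complex.exp (-1) := by
    rw [Complex.ofReal_mul, hNp]
    congr 1
    rw [Complex.ofReal_exp]; norm_num
  rw [hsplit, ← hsC]
  field_simp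
  ring_nf
  rw [Complex.ofReal_mul, Complex.ofReal_ofNat]
  linear_combination ((Real.pi : ℂ) * (N:ℂ) ^ (2 + (k:ℂ)) * 8) * hee

end
end

section
/- Let l, m, r, s ≥ 1 be integers, let a > 0, let N be a positive integer, and let k > (r+s)/2 be real. Suppose E_l and E_m are functions on the vertical line z = a+iy satisfying |E_j(a,y)| ≪ |z|^{1/2} for |y| ≤ a and |E_j(a,y)| ≪ |z|^{1/2}(1 + log²(|y|/a)) for |y| > a (j ∈ {l,m}). Then ∫_{(a)} |e^{Nz}·z^{−k−1}|·|E_l(a,y)|^r·|E_m(a,y)|^s |dz| ≪_{l,m,r,s} e^{Na}·a^{−k+(r+s)/2}. -/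
open Complex MeasureTheory Set

noncomputable section

lemma aux_log_bound (n : ℕ) (hn : 1 ≤ n) {δ : ℝ} (hδ : 0 < δ) :
    ∃ D : ℝ, 1 ≤ D ∧ ∀ t : ℝ, 1 ≤ t → (1 + Real.log t ^ 2) ^ n ≤ D * t ^ (δ / 2) := by
  set ε : ℝ := δ / (4 * n) with hε_def
  have hε : 0 < ε := by positivity
  refine ⟨(1 + ε⁻¹ ^ 2) ^ n, one_le_pow₀ (by nlinarith [sq_nonneg ε⁻¹]), fun t ht => ?_⟩
  have ht0 : (0 : ℝ) < t := lt_of_lt_of_le one_pos ht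
  have hlog : Real.log t ≤ ε⁻¹ * t ^ ε := by
    have := Real.log_le_rpow_div ht0.le hε
    rwa [div_eq_inv_mul] at this
  have hlog2 : Real.log t ^ 2 ≤ ε⁻¹ ^ 2 * (t ^ ε) ^ 2 := by
    rw [← mul_pow]
    exact pow_le_pow_left₀ (Real.log_nonneg ht) hlog 2
  have htε : (1 : ℝ) ≤ (t ^ ε) ^ 2 := by
    have : (1:ℝ) ≤ t ^ ε := Real.one_le_rpow ht hε.le
    nlinarith
  have hbase : 1 + Real.log t ^ 2 ≤ (1 + ε⁻¹ ^ 2) * (t ^ ε) ^ 2 := by nlinarith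
  have hmain : (1 + Real.log t ^ 2) ^ n ≤ ((1 + ε⁻¹ ^ 2) * (t ^ ε) ^ 2) ^ n :=
    pow_le_pow_left₀ (by positivity) hbase n
  refine hmain.trans_eq ?_
  have hn' : (n : ℝ) ≠ 0 := Nat.cast_ne_zero.mpr (by omega)
  have hexp : ε * ((2 * n : ℕ) : ℝ) = δ / 2 := by
    rw [hε_def]; push_cast
    rw [div_mul_eq_mul_div, div_eq_div_iff (by positivity : (0:ℝ) < 4 * n).ne' two_ne_zero]
    ring
  rw [mul_pow, ← pow_mul, ← Real.rpow_natCast (t ^ ε) (2 * n), ← Real.rpow_mul ht0.le, hexp]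

/-- If `E_l, E_m` satisfy the error-term bounds of Lemma 1 on the line `Re z = a`, then
`∫_{(a)} |e^{Nz} z^{-k-1}| |E_l|^r |E_m|^s |dz| ≪_{l,m,r,s} e^{Na} a^{-k+(r+s)/2}`
for `k > (r+s)/2`. -/
theorem error_terms_integral_bound (l m r s : ℕ)
    (hl : 1 ≤ l) (hm : 1 ≤ m) (hr : 1 ≤ r) (hs : 1 ≤ s)
    (Cl Cm : ℝ) (hCl : 0 < Cl) (hCm : 0 < Cm)
    (k : ℝ) (hk : ((r : ℝ) + s) / 2 < k) :
    ∃ C : ℝ, 0 < C ∧ ∀ a : ℝ, 0 < a → ∀ N : ℕ, 0 < N → ∀ El Em : ℝ → ℂ,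
      (∀ y : ℝ, |y| ≤ a → ‖El y‖ ≤ Cl * ‖(a : ℂ) + y * Complex.I‖ ^ ((1 : ℝ) / 2)) →
      (∀ y : ℝ, a < |y| → ‖El y‖ ≤ Cl * ‖(a : ℂ) + y * Complex.I‖ ^ ((1 : ℝ) / 2) *
          (1 + Real.log (|y| / a) ^ 2)) →
      (∀ y : ℝ, |y| ≤ a → ‖Em y‖ ≤ Cm * ‖(a : ℂ) + y * Complex.I‖ ^ ((1 : ℝ) / 2)) →
      (∀ y : ℝ, a < |y| → ‖Em y‖ ≤ Cm * ‖(a : ℂ) + y * Complex.I‖ ^ ((1 : ℝ) / 2) *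
          (1 + Real.log (|y| / a) ^ 2)) →
      (∫ y : ℝ,
          ‖Complex.exp ((N : ℂ) * ((a : ℂ) + y * Complex.I)) *
              ((a : ℂ) + y * Complex.I) ^ (-(k : ℂ) - 1)‖ *
            ‖El y‖ ^ r * ‖Em y‖ ^ s)
        ≤ C * Real.exp (N * a) * a ^ (-k + ((r : ℝ) + s) / 2) := by
  set δ : ℝ := k - ((r : ℝ) + s) / 2 with hδ_def
  have hδ : 0 < δ := by simp only [hδ_def]; linarith
  obtain ⟨D, hD1, hD⟩ := aux_log_bound (r + s) (by omega) hδ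
  have hD0 : 0 < D := lt_of_lt_of_le one_pos hD1
  refine ⟨Cl ^ r * Cm ^ s * (2 + 4 * D / δ), by positivity, ?_⟩
  intro a ha N hN El Em hEl1 hEl2 hEm1 hEm2
  set E : ℝ := Real.exp (N * a) with hE_def
  have hE : 0 < E := Real.exp_pos _
  set c1 : ℝ := E * Cl ^ r * Cm ^ s * a ^ (-k - 1 + ((r : ℝ) + s) / 2) with hc1_def
  set c2 : ℝ := E * Cl ^ r * Cm ^ s * D * a ^ (-(δ / 2)) with hc2_def
  have hc1 : 0 < c1 := by positivity
  have hc2 : 0 < c2 := by positivity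
  set G : ℝ → ℝ := fun t => if t ≤ a then c1 else c2 * t ^ (-1 - δ / 2) with hG_def
  -- norm facts about z = a + y i
  have hzre : ∀ y : ℝ, ((a : ℂ) + y * Complex.I).re = a := by intro y; simp
  have hzim : ∀ y : ℝ, ((a : ℂ) + y * Complex.I).im = y := by intro y; simp
  have hza : ∀ y : ℝ, a ≤ ‖(a : ℂ) + y * Complex.I‖ := by
    intro y
    have := Complex.abs_re_le_norm ((a : ℂ) + y * Complex.I)
    rw [hzre y, abs_of_pos ha] at this
    exact this
  have hzy : ∀ y : ℝ, |y| ≤ ‖(a : ℂ) + y * Complex.I‖ := by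
    intro y
    have := Complex.abs_im_le_norm ((a : ℂ) + y * Complex.I)
    rwa [hzim y] at this
  have hzpos : ∀ y : ℝ, 0 < ‖(a : ℂ) + y * Complex.I‖ := fun y => lt_of_lt_of_le ha (hza y)
  -- norm of the exponential-cpow factor
  have hnorm : ∀ y : ℝ,
      ‖Complex.exp ((N : ℂ) * ((a : ℂ) + y * Complex.I)) *
        ((a : ℂ) + y * Complex.I) ^ (-(k : ℂ) - 1)‖
      = E * ‖(a : ℂ) + y * Complex.I‖ ^ (-k - 1) := by
    intro y
    rw [norm_mul, Complex.norm_exp,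
      show -(k : ℂ) - 1 = ((-k - 1 : ℝ) : ℂ) by push_cast; ring,
      Complex.norm_cpow_real]
    congr 2
    simp [Complex.mul_re, hzre y, hzim y]
  -- the pointwise bound
  have hpoint : ∀ y : ℝ,
      ‖Complex.exp ((N : ℂ) * ((a : ℂ) + y * Complex.I)) *
          ((a : ℂ) + y * Complex.I) ^ (-(k : ℂ) - 1)‖ *
        ‖El y‖ ^ r * ‖Em y‖ ^ s ≤ G |y| := by
    intro y
    set X : ℝ := ‖(a : ℂ) + y * Complex.I‖ with hX_def
    have hX : 0 < X := hzpos y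
    rw [hnorm y]
    have hXpow : ∀ L : ℝ, 0 ≤ L →
        E * X ^ (-k - 1) * (Cl * X ^ ((1:ℝ)/2) * L) ^ r * (Cm * X ^ ((1:ℝ)/2) * L) ^ s
          = E * Cl ^ r * Cm ^ s * X ^ (-1 - δ) * L ^ (r + s) := by
      intro L hL
      have h1 : (X ^ ((1:ℝ)/2)) ^ (r + s) = X ^ (((r : ℝ) + s) / 2) := by
        rw [← Real.rpow_natCast (X ^ ((1:ℝ)/2)) (r + s), ← Real.rpow_mul hX.le]
        congr 1
        push_cast
        ring
      have h2 : X ^ (-k - 1) * X ^ (((r : ℝ) + s) / 2) = X ^ (-1 - δ) := by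
        rw [← Real.rpow_add hX]
        congr 1
        rw [hδ_def]
        ring
      calc E * X ^ (-k - 1) * (Cl * X ^ ((1:ℝ)/2) * L) ^ r * (Cm * X ^ ((1:ℝ)/2) * L) ^ s
          = E * Cl ^ r * Cm ^ s * (X ^ (-k - 1) * (X ^ ((1:ℝ)/2)) ^ (r + s)) * L ^ (r + s) := by
            rw [mul_pow, mul_pow, mul_pow, mul_pow, pow_add, pow_add]
            ring
        _ = E * Cl ^ r * Cm ^ s * X ^ (-1 - δ) * L ^ (r + s) := by rw [h1, h2]
    by_cases hy : |y| ≤ a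
    · rw [hG_def]
      simp only [if_pos hy]
      have hb : E * X ^ (-k - 1) * ‖El y‖ ^ r * ‖Em y‖ ^ s ≤
          E * X ^ (-k - 1) * (Cl * X ^ ((1:ℝ)/2) * 1) ^ r * (Cm * X ^ ((1:ℝ)/2) * 1) ^ s := by
        have h1 : ‖El y‖ ^ r ≤ (Cl * X ^ ((1:ℝ)/2) * 1) ^ r :=
          pow_le_pow_left₀ (norm_nonneg _) (by rw [mul_one]; exact hEl1 y hy) r
        have h2 : ‖Em y‖ ^ s ≤ (Cm * X ^ ((1:ℝ)/2) * 1) ^ s :=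
          pow_le_pow_left₀ (norm_nonneg _) (by rw [mul_one]; exact hEm1 y hy) s
        exact mul_le_mul (mul_le_mul_of_nonneg_left h1 (by positivity)) h2
          (by positivity) (by positivity)
      refine hb.trans ?_
      rw [hXpow 1 zero_le_one, one_pow, mul_one]
      have : X ^ (-1 - δ) ≤ a ^ (-1 - δ) :=
        Real.rpow_le_rpow_of_nonpos ha (hza y) (by linarith)
      calc E * Cl ^ r * Cm ^ s * X ^ (-1 - δ) ≤ E * Cl ^ r * Cm ^ s * a ^ (-1 - δ) := by gcongr
        _ = c1 := by
            rw [hc1_def]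
            congr 1
            rw [hδ_def]
            ring_nf
    · push_neg at hy
      rw [hG_def]
      simp only [if_neg (not_le.mpr hy)]
      have hy0 : 0 < |y| := lt_trans ha hy
      set L : ℝ := 1 + Real.log (|y| / a) ^ 2 with hL_def
      have hL : 0 ≤ L := by positivity
      have hb : E * X ^ (-k - 1) * ‖El y‖ ^ r * ‖Em y‖ ^ s ≤
          E * X ^ (-k - 1) * (Cl * X ^ ((1:ℝ)/2) * L) ^ r * (Cm * X ^ ((1:ℝ)/2) * L) ^ s := by
        have h1 : ‖El y‖ ^ r ≤ (Cl * X ^ ((1:ℝ)/2) * L) ^ r :=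
          pow_le_pow_left₀ (norm_nonneg _) (hEl2 y hy) r
        have h2 : ‖Em y‖ ^ s ≤ (Cm * X ^ ((1:ℝ)/2) * L) ^ s :=
          pow_le_pow_left₀ (norm_nonneg _) (hEm2 y hy) s
        exact mul_le_mul (mul_le_mul_of_nonneg_left h1 (by positivity)) h2
          (by positivity) (by positivity)
      refine hb.trans ?_
      rw [hXpow L hL]
      have hXy : X ^ (-1 - δ) ≤ |y| ^ (-1 - δ) :=
        Real.rpow_le_rpow_of_nonpos hy0 (hzy y) (by linarith)
      have hLb : L ^ (r + s) ≤ D * (|y| / a) ^ (δ / 2) :=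
        hD (|y| / a) ((one_le_div ha).mpr hy.le)
      calc E * Cl ^ r * Cm ^ s * X ^ (-1 - δ) * L ^ (r + s)
          ≤ E * Cl ^ r * Cm ^ s * |y| ^ (-1 - δ) * (D * (|y| / a) ^ (δ / 2)) := by
            gcongr
        _ = c2 * |y| ^ (-1 - δ / 2) := by
            have hyy : |y| ^ (-1 - δ) * |y| ^ (δ / 2) = |y| ^ (-1 - δ / 2) := by
              rw [← Real.rpow_add hy0]; congr 1; ring
            rw [hc2_def, Real.div_rpow (abs_nonneg y) ha.le, Real.rpow_neg ha.le,
              div_eq_mul_inv]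
            calc E * Cl ^ r * Cm ^ s * |y| ^ (-1 - δ) * (D * (|y| ^ (δ / 2) * (a ^ (δ / 2))⁻¹))
                = E * Cl ^ r * Cm ^ s * D * (a ^ (δ / 2))⁻¹ *
                    (|y| ^ (-1 - δ) * |y| ^ (δ / 2)) := by ring
              _ = E * Cl ^ r * Cm ^ s * D * (a ^ (δ / 2))⁻¹ * |y| ^ (-1 - δ / 2) := by
                  rw [hyy]
  -- integrability of G on pieces
  have hexp_lt : (-1 - δ / 2 : ℝ) < -1 := by linarith
  have hG_Ioc : IntegrableOn G (Ioc 0 a) := by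
    have hconst : IntegrableOn (fun _ : ℝ => c1) (Ioc 0 a) :=
      integrableOn_const (by rw [Real.volume_Ioc]; exact ENNReal.ofReal_ne_top)
    refine hconst.congr_fun (fun t ht => ?_) measurableSet_Ioc
    rw [hG_def]; simp only [if_pos ht.2]
  have hG_Ioi : IntegrableOn G (Ioi a) := by
    have hint : IntegrableOn (fun t : ℝ => c2 * t ^ (-1 - δ / 2)) (Ioi a) :=
      (integrableOn_Ioi_rpow_of_lt hexp_lt ha).const_mul c2
    refine hint.congr_fun (fun t ht => ?_) measurableSet_Ioi
    rw [hG_def]; simp only [if_neg (not_le.mpr (mem_Ioi.mp ht))]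
  have hG_Ioi0 : IntegrableOn G (Ioi 0) := by
    rw [← Ioc_union_Ioi_eq_Ioi ha.le, integrableOn_union]
    exact ⟨hG_Ioc, hG_Ioi⟩
  -- integrability of g = G ∘ |·|
  have hg_Ioi : IntegrableOn (fun y : ℝ => G |y|) (Ioi 0) :=
    hG_Ioi0.congr_fun (fun x hx => by rw [abs_of_pos (mem_Ioi.mp hx)]) measurableSet_Ioi
  have hg_Iic : IntegrableOn (fun y : ℝ => G |y|) (Iic 0) := by
    have hme : MeasurableEmbedding fun x : ℝ => -x := (Homeomorph.neg ℝ).measurableEmbedding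
    rw [show (volume : Measure ℝ) = Measure.map Neg.neg volume from
      (Measure.map_neg_eq_self (volume : Measure ℝ)).symm, hme.integrableOn_map_iff]
    simp only [Function.comp_def, abs_neg, neg_preimage, neg_Iic, neg_zero]
    exact Iff.mpr integrableOn_Ici_iff_integrableOn_Ioi hg_Ioi
  have hg_int : Integrable (fun y : ℝ => G |y|) := by
    rw [← integrableOn_univ, ← Set.Iic_union_Ioi (a := (0:ℝ))]
    exact hg_Iic.union hg_Ioi
  -- the comparison
  have hmono : (∫ y : ℝ,
      ‖Complex.exp ((N : ℂ) * ((a : ℂ) + y * Complex.I)) *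
          ((a : ℂ) + y * Complex.I) ^ (-(k : ℂ) - 1)‖ *
        ‖El y‖ ^ r * ‖Em y‖ ^ s) ≤ ∫ y : ℝ, G |y| := by
    refine integral_mono_of_nonneg (ae_of_all _ fun y => by positivity) hg_int
      (ae_of_all _ hpoint)
  refine hmono.trans ?_
  -- compute the integral of G |y|
  rw [integral_comp_abs (f := G)]
  have hsplit : ∫ t in Ioi (0:ℝ), G t = (∫ t in Ioc 0 a, G t) + ∫ t in Ioi a, G t := by
    rw [← Ioc_union_Ioi_eq_Ioi ha.le,
      setIntegral_union (Ioc_disjoint_Ioi le_rfl) measurableSet_Ioi hG_Ioc hG_Ioi]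
  have hI1 : ∫ t in Ioc 0 a, G t = c1 * a := by
    rw [setIntegral_congr_fun measurableSet_Ioc
      (g := fun _ => c1) (fun t ht => by rw [hG_def]; simp only [if_pos ht.2]),
      setIntegral_const, Real.volume_real_Ioc_of_le ha.le, sub_zero,
      smul_eq_mul, mul_comm]
  have hI2 : ∫ t in Ioi a, G t = c2 * (a ^ (-(δ / 2)) * (2 / δ)) := by
    rw [setIntegral_congr_fun measurableSet_Ioi
      (g := fun t => c2 * t ^ (-1 - δ / 2))
      (fun t ht => by rw [hG_def]; simp only [if_neg (not_le.mpr (mem_Ioi.mp ht))]),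
      integral_const_mul, integral_Ioi_rpow_of_lt hexp_lt ha]
    congr 1
    rw [show (-1 - δ / 2 : ℝ) + 1 = -(δ / 2) by ring]
    field_simp
  rw [hsplit, hI1, hI2]
  -- final arithmetic
  have ha1 : c1 * a = E * Cl ^ r * Cm ^ s * a ^ (-k + ((r : ℝ) + s) / 2) := by
    rw [hc1_def, mul_assoc, ← Real.rpow_add_one ha.ne']
    rw [show (-k - 1 + ((r : ℝ) + s) / 2) + 1 = -k + ((r : ℝ) + s) / 2 by ring]
  have ha2 : a ^ (-(δ / 2)) * a ^ (-(δ / 2)) = a ^ (-k + ((r : ℝ) + s) / 2) := by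
    rw [← Real.rpow_add ha]
    congr 1
    rw [hδ_def]
    ring
  have ha3 : c2 * (a ^ (-(δ / 2)) * (2 / δ))
      = E * Cl ^ r * Cm ^ s * D * (2 / δ) * a ^ (-k + ((r : ℝ) + s) / 2) := by
    rw [hc2_def, ← ha2]; ring
  refine le_of_eq ?_
  rw [ha1, ha3, hE_def]
  have hδ' : δ ≠ 0 := hδ.ne'
  field_simp
  ring

end
end
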